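/- For every real k, the internal-mode overlap A_{2,a}(k) = ∫_{-∞}^{∞} cos(√2 k ξ) tanh²(ξ) sech³(ξ) dξ equals π(-4k⁴ + 4k² + 3) / (24 cosh(πk/√2)). -/

import Mathlib

open Real MeasureTheory

open Set Filter Topology

noncomputable def sech (x : ℝ) : ℝ := (Real.cosh x)⁻¹

lemma sech_pos (x : ℝ) : 0 < sech x := inv_pos.2 (Real.cosh_pos x)

lemma sech_le_one (x : ℝ) : sech x ≤ 1 := by
  rw [sech, inv_le_one_iff₀]; right; exact Real.one_le_cosh x

lemma sech_mul_cosh (x : ℝ) : sech x * Real.cosh x = 1 :=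
  inv_mul_cancel₀ (Real.cosh_pos x).ne'

lemma continuous_sech : Continuous sech :=
  Real.continuous_cosh.inv₀ fun x => (Real.cosh_pos x).ne'

lemma tanh_sq (x : ℝ) : Real.tanh x ^ 2 = 1 - sech x ^ 2 := by
  have h := Real.cosh_sq_sub_sinh_sq x
  have hc := (Real.cosh_pos x).ne'
  rw [Real.tanh_eq_sinh_div_cosh, sech, div_pow, inv_pow]
  field_simp
  linarith

lemma abs_tanh_le_one (x : ℝ) : |Real.tanh x| ≤ 1 := by
  have h := tanh_sq x
  have h2 := sq_nonneg (sech x)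
  nlinarith [abs_nonneg (Real.tanh x), sq_abs (Real.tanh x)]

lemma sech_le_exp (x : ℝ) : sech x ≤ 2 * Real.exp (-|x|) := by
  have h1 : Real.exp |x| ≤ 2 * Real.cosh x := by
    rw [← Real.cosh_abs, Real.cosh_eq]
    have := (Real.exp_pos (-|x|)).le
    linarith
  rw [sech, Real.exp_neg]
  have h2 : 2 * (Real.exp |x|)⁻¹ = (Real.exp |x| / 2)⁻¹ := by
    field_simp
  rw [h2]
  exact inv_anti₀ (by positivity) (by linarith)
lemma integrable_sech : Integrable sech := by
  have h1 : IntegrableOn sech (Iic (0:ℝ)) := by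
    have he : IntegrableOn (fun x => 2 * Real.exp x) (Iic (0:ℝ)) :=
      (integrableOn_exp_Iic 0).const_mul 2
    refine he.mono' continuous_sech.aestronglyMeasurable.restrict ?_
    filter_upwards [ae_restrict_mem measurableSet_Iic] with x hx
    have := sech_le_exp x
    rw [Real.norm_eq_abs, abs_of_pos (sech_pos x)]
    have hax : -|x| ≤ x := neg_abs_le x
    calc sech x ≤ 2 * Real.exp (-|x|) := sech_le_exp x
      _ ≤ 2 * Real.exp x := by
          have : Real.exp (-|x|) ≤ Real.exp x := Real.exp_le_exp.2 hax
          linarith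
  have h2 : IntegrableOn sech (Ioi (0:ℝ)) := by
    have he : IntegrableOn (fun x => 2 * Real.exp (-(1:ℝ) * x)) (Ioi (0:ℝ)) :=
      (exp_neg_integrableOn_Ioi 0 one_pos).const_mul 2
    refine he.mono' continuous_sech.aestronglyMeasurable.restrict ?_
    filter_upwards [ae_restrict_mem measurableSet_Ioi] with x hx
    rw [Real.norm_eq_abs, abs_of_pos (sech_pos x)]
    calc sech x ≤ 2 * Real.exp (-|x|) := sech_le_exp x
      _ = 2 * Real.exp (-1 * x) := by
          rw [abs_of_pos (mem_Ioi.1 hx)]; ring_nf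
  have := h1.union h2
  rw [Iic_union_Ioi] at this
  rwa [← integrableOn_univ]

lemma integrable_of_le_sech {E : Type*} [NormedAddCommGroup E] {f : ℝ → E} (C : ℝ)
    (hf : Continuous f) (h : ∀ x, ‖f x‖ ≤ C * sech x) : Integrable f :=
  (integrable_sech.const_mul C).mono' hf.aestronglyMeasurable (ae_of_all _ h)

lemma sech_pow_le (n : ℕ) (hn : 1 ≤ n) (x : ℝ) : sech x ^ n ≤ sech x := by
  calc sech x ^ n ≤ sech x ^ 1 :=
        pow_le_pow_of_le_one (sech_pos x).le (sech_le_one x) hn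
    _ = sech x := pow_one _

lemma integrable_cos_sech_pow (κ : ℝ) (n : ℕ) (hn : 1 ≤ n) :
    Integrable (fun x => Real.cos (κ * x) * sech x ^ n) := by
  refine integrable_of_le_sech 1 ((Real.continuous_cos.comp (continuous_const.mul continuous_id)).mul (continuous_sech.pow n)) fun x => ?_
  rw [one_mul, Real.norm_eq_abs, abs_mul]
  calc |Real.cos (κ * x)| * |sech x ^ n| ≤ 1 * |sech x ^ n| :=
        mul_le_mul_of_nonneg_right (Real.abs_cos_le_one _) (abs_nonneg _)
    _ = sech x ^ n := by rw [one_mul, abs_of_pos (pow_pos (sech_pos x) n)]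
    _ ≤ sech x := sech_pow_le n hn x

lemma tendsto_sech_atTop : Tendsto sech atTop (𝓝 0) := by
  have hb : ∀ x : ℝ, ‖sech x‖ ≤ 2 * Real.exp (-|x|) := fun x => by
    rw [Real.norm_eq_abs, abs_of_pos (sech_pos x)]; exact sech_le_exp x
  refine squeeze_zero_norm hb ?_
  have h : Tendsto (fun x : ℝ => 2 * Real.exp (-|x|)) atTop (𝓝 (2 * 0)) :=
    Tendsto.const_mul 2 (Real.tendsto_exp_atBot.comp
      (tendsto_neg_atBot_iff.2 tendsto_abs_atTop_atTop))
  simpa using h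

lemma tendsto_sech_atBot : Tendsto sech atBot (𝓝 0) := by
  have hb : ∀ x : ℝ, ‖sech x‖ ≤ 2 * Real.exp (-|x|) := fun x => by
    rw [Real.norm_eq_abs, abs_of_pos (sech_pos x)]; exact sech_le_exp x
  refine squeeze_zero_norm hb ?_
  have h : Tendsto (fun x : ℝ => 2 * Real.exp (-|x|)) atBot (𝓝 (2 * 0)) :=
    Tendsto.const_mul 2 (Real.tendsto_exp_atBot.comp
      (tendsto_neg_atBot_iff.2 tendsto_abs_atBot_atTop))
  simpa using h
lemma hasDerivAt_sech (x : ℝ) : HasDerivAt sech (-(Real.tanh x * sech x)) x := by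
  have h := (Real.hasDerivAt_cosh x).inv (Real.cosh_pos x).ne'
  refine h.congr_deriv ?_; symm
  have hc := (Real.cosh_pos x).ne'
  rw [Real.tanh_eq_sinh_div_cosh, sech]
  field_simp

lemma hasDerivAt_tanh (x : ℝ) : HasDerivAt Real.tanh (sech x ^ 2) x := by
  have h := (Real.hasDerivAt_sinh x).div (Real.hasDerivAt_cosh x) (Real.cosh_pos x).ne'
  have he : Real.tanh = fun x => Real.sinh x / Real.cosh x :=
    funext fun x => Real.tanh_eq_sinh_div_cosh x
  rw [he]
  refine h.congr_deriv ?_; symm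
  have hc := Real.cosh_sq_sub_sinh_sq x
  rw [sech, inv_pow]
  field_simp
  linarith

lemma hasDerivAt_sech_pow (n : ℕ) (x : ℝ) :
    HasDerivAt (fun y => sech y ^ n) (-(n : ℝ) * Real.tanh x * sech x ^ n) x := by
  have h := (hasDerivAt_sech x).pow n
  refine h.congr_deriv ?_; symm
  rcases Nat.eq_zero_or_pos n with rfl | hn
  · simp
  · have : sech x ^ (n - 1) * sech x = sech x ^ n := by
      rw [← pow_succ, Nat.sub_add_cancel hn]
    rw [← this]; ring

lemma hasDerivAt_G (n : ℕ) (κ x : ℝ) :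
    HasDerivAt (fun x => (n : ℝ) * (Real.cos (κ * x) * sech x ^ n * Real.tanh x)
        - κ * (Real.sin (κ * x) * sech x ^ n))
      ((n : ℝ) * ((n : ℝ) + 1) * (Real.cos (κ * x) * sech x ^ (n + 2))
        - ((n : ℝ) ^ 2 + κ ^ 2) * (Real.cos (κ * x) * sech x ^ n)) x := by
  have hcos : HasDerivAt (fun y => Real.cos (κ * y)) (-κ * Real.sin (κ * x)) x := by
    have := (Real.hasDerivAt_cos (κ * x)).comp x ((hasDerivAt_id x).const_mul κ)
    refine this.congr_deriv ?_; ring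
  have hsin : HasDerivAt (fun y => Real.sin (κ * y)) (κ * Real.cos (κ * x)) x := by
    have := (Real.hasDerivAt_sin (κ * x)).comp x ((hasDerivAt_id x).const_mul κ)
    refine this.congr_deriv ?_; ring
  have h1 := (((hcos.mul (hasDerivAt_sech_pow n x)).mul (hasDerivAt_tanh x)).const_mul (n : ℝ))
  have h2 := ((hsin.mul (hasDerivAt_sech_pow n x)).const_mul κ)
  have h := h1.sub h2
  refine h.congr_deriv ?_; symm
  have ht : Real.tanh x ^ 2 = 1 - sech x ^ 2 := tanh_sq x
  have hp : sech x ^ n * sech x ^ 2 = sech x ^ (n + 2) := by rw [← pow_add]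
  simp only [Pi.mul_apply]
  linear_combination ((n : ℝ) ^ 2 * Real.cos (κ * x) * sech x ^ n) * ht
    + (-(n : ℝ) * ((n : ℝ) + 1) * Real.cos (κ * x)) * hp
lemma recur (κ : ℝ) (n : ℕ) (hn : 1 ≤ n) :
    (n : ℝ) * ((n : ℝ) + 1) * ∫ x : ℝ, Real.cos (κ * x) * sech x ^ (n + 2)
      = ((n : ℝ) ^ 2 + κ ^ 2) * ∫ x : ℝ, Real.cos (κ * x) * sech x ^ n := by
  set G : ℝ → ℝ := fun x => (n : ℝ) * (Real.cos (κ * x) * sech x ^ n * Real.tanh x)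
      - κ * (Real.sin (κ * x) * sech x ^ n) with hG
  set G' : ℝ → ℝ := fun x => (n : ℝ) * ((n : ℝ) + 1) * (Real.cos (κ * x) * sech x ^ (n + 2))
      - ((n : ℝ) ^ 2 + κ ^ 2) * (Real.cos (κ * x) * sech x ^ n) with hG'
  have hd : ∀ x, HasDerivAt G (G' x) x := fun x => hasDerivAt_G n κ x
  have hi1 : Integrable (fun x => Real.cos (κ * x) * sech x ^ (n + 2)) :=
    integrable_cos_sech_pow κ (n + 2) (by omega)
  have hi2 : Integrable (fun x => Real.cos (κ * x) * sech x ^ n) :=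
    integrable_cos_sech_pow κ n hn
  have hiG' : Integrable G' := ((hi1.const_mul _).sub (hi2.const_mul _))
  have hbound : ∀ x, ‖G x‖ ≤ ((n : ℝ) + |κ|) * sech x := by
    intro x
    have hs := sech_pos x
    have hsn : sech x ^ n ≤ sech x := sech_pow_le n hn x
    have hsn0 : (0:ℝ) < sech x ^ n := pow_pos hs n
    have hc := Real.abs_cos_le_one (κ * x)
    have hsin := Real.abs_sin_le_one (κ * x)
    have hth := abs_tanh_le_one x
    rw [Real.norm_eq_abs]
    calc |G x| ≤ |(n : ℝ) * (Real.cos (κ * x) * sech x ^ n * Real.tanh x)|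
          + |κ * (Real.sin (κ * x) * sech x ^ n)| := abs_sub _ _
      _ ≤ (n : ℝ) * sech x + |κ| * sech x := by
          have hA : |sech x ^ n| ≤ sech x := by rw [abs_of_pos hsn0]; exact hsn
          have e1 : |(n : ℝ) * (Real.cos (κ * x) * sech x ^ n * Real.tanh x)|
              = (n : ℝ) * (|Real.cos (κ * x)| * |sech x ^ n| * |Real.tanh x|) := by
            rw [abs_mul, abs_mul, abs_mul, Nat.abs_cast]
          have e2 : |κ * (Real.sin (κ * x) * sech x ^ n)|
              = |κ| * (|Real.sin (κ * x)| * |sech x ^ n|) := by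
            rw [abs_mul, abs_mul]
          rw [e1, e2]
          have hn0 : (0:ℝ) ≤ (n : ℝ) := Nat.cast_nonneg n
          have hk0 : (0:ℝ) ≤ |κ| := abs_nonneg κ
          have t1 : |Real.cos (κ * x)| * |sech x ^ n| * |Real.tanh x| ≤ 1 * sech x * 1 := by
            gcongr <;> first | assumption | positivity
          have t2 : |Real.sin (κ * x)| * |sech x ^ n| ≤ 1 * sech x := by
            gcongr <;> first | assumption | positivity
          rw [one_mul, mul_one] at t1
          rw [one_mul] at t2
          nlinarith
      _ = ((n : ℝ) + |κ|) * sech x := by ring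
  have htop : Tendsto G atTop (𝓝 0) := by
    refine squeeze_zero_norm hbound ?_
    have := tendsto_sech_atTop.const_mul ((n : ℝ) + |κ|)
    simpa using this
  have hbot : Tendsto G atBot (𝓝 0) := by
    refine squeeze_zero_norm hbound ?_
    have := tendsto_sech_atBot.const_mul ((n : ℝ) + |κ|)
    simpa using this
  have hIoi : ∫ x in Ioi (0:ℝ), G' x = 0 - G 0 :=
    integral_Ioi_of_hasDerivAt_of_tendsto
      (hd 0).continuousAt.continuousWithinAt
      (fun x _ => hd x) hiG'.integrableOn htop
  have hIic : ∫ x in Iic (0:ℝ), G' x = G 0 - 0 :=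
    integral_Iic_of_hasDerivAt_of_tendsto
      (hd 0).continuousAt.continuousWithinAt
      (fun x _ => hd x) hiG'.integrableOn hbot
  have hzero : ∫ x : ℝ, G' x = 0 := by
    rw [← setIntegral_univ, ← Iic_union_Ioi (a := (0:ℝ)),
      setIntegral_union (Iic_disjoint_Ioi le_rfl) measurableSet_Ioi
        hiG'.integrableOn hiG'.integrableOn, hIoi, hIic]
    ring
  rw [hG'] at hzero
  rw [integral_sub (hi1.const_mul _) (hi2.const_mul _),
    integral_const_mul, integral_const_mul] at hzero
  linarith
lemma tanh_mem_Ioo (x : ℝ) : Real.tanh x ∈ Ioo (-1 : ℝ) 1 := by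
  have hc := Real.cosh_pos x
  have h1 : Real.cosh x - Real.sinh x = Real.exp (-x) := Real.cosh_sub_sinh x
  have h2 : Real.cosh x + Real.sinh x = Real.exp x := Real.cosh_add_sinh x
  have e1 := Real.exp_pos (-x)
  have e2 := Real.exp_pos x
  rw [Real.tanh_eq_sinh_div_cosh]
  constructor
  · rw [lt_div_iff₀ hc]; linarith
  · rw [div_lt_one hc]; linarith

lemma tanh_surj {v : ℝ} (hv : v ∈ Ioo (-1 : ℝ) 1) : ∃ y : ℝ, Real.tanh y = v := by
  obtain ⟨hv1, hv2⟩ := hv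
  have h1 : (0:ℝ) < 1 + v := by linarith
  have h2 : (0:ℝ) < 1 - v := by linarith
  set A : ℝ := (1 + v) / (1 - v) with hA
  have hApos : 0 < A := div_pos h1 h2
  refine ⟨Real.log A / 2, ?_⟩
  set y := Real.log A / 2 with hy
  have hE : Real.exp y ^ 2 = A := by
    rw [← Real.exp_nat_mul]
    push_cast
    rw [hy]
    rw [show (2:ℝ) * (Real.log A / 2) = Real.log A by ring, Real.exp_log hApos]
  have hEpos := Real.exp_pos y
  rw [Real.tanh_eq_sinh_div_cosh, Real.sinh_eq, Real.cosh_eq, Real.exp_neg]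
  have hden : (0:ℝ) < (Real.exp y + (Real.exp y)⁻¹) / 2 := by positivity
  rw [div_eq_iff hden.ne']
  have hA2 : Real.exp y ^ 2 * (1 - v) = 1 + v := by
    rw [hE, hA]; field_simp
  field_simp
  nlinarith [hA2, hEpos]
noncomputable def phi (y : ℝ) : ℝ := (1 + Real.tanh y) / 2

lemma hasDerivAt_phi (y : ℝ) : HasDerivAt phi (sech y ^ 2 / 2) y := by
  have h := ((hasDerivAt_tanh y).const_add 1).div_const 2
  exact h

lemma phi_eq (y : ℝ) : phi y = Real.exp y / (2 * Real.cosh y) := by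
  have hc := (Real.cosh_pos y).ne'
  have h := Real.cosh_add_sinh y
  rw [phi, Real.tanh_eq_sinh_div_cosh]
  field_simp
  ring_nf; linarith

lemma one_sub_phi (y : ℝ) : 1 - phi y = Real.exp (-y) / (2 * Real.cosh y) := by
  have hc := (Real.cosh_pos y).ne'
  have h := Real.cosh_add_sinh y
  rw [phi, Real.tanh_eq_sinh_div_cosh]
  field_simp
  linear_combination Real.cosh_sub_sinh y

lemma phi_mem (y : ℝ) : phi y ∈ Ioo (0 : ℝ) 1 := by
  obtain ⟨h1, h2⟩ := tanh_mem_Ioo y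
  constructor
  · rw [phi]; linarith
  · rw [phi]; linarith

lemma phi_strictMono : StrictMono phi := by
  have h : ∀ y : ℝ, 0 < sech y ^ 2 / 2 :=
    fun y => div_pos (pow_pos (sech_pos y) 2) two_pos
  exact strictMono_of_deriv_pos fun y => by
    rw [(hasDerivAt_phi y).deriv]; exact h y

lemma phi_image : phi '' univ = Ioo (0 : ℝ) 1 := by
  apply Subset.antisymm
  · rintro _ ⟨y, -, rfl⟩
    exact phi_mem y
  · rintro u ⟨hu1, hu2⟩
    have hv : 2 * u - 1 ∈ Ioo (-1 : ℝ) 1 := ⟨by linarith, by linarith⟩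
    obtain ⟨y, hy⟩ := tanh_surj hv
    exact ⟨y, mem_univ y, by rw [phi, hy]; ring⟩

lemma cpow_pos_eq {x : ℝ} (hx : 0 < x) (w : ℂ) :
    (x : ℂ) ^ w = Complex.exp (w * (Real.log x : ℂ)) := by
  rw [Complex.cpow_def_of_ne_zero (Complex.ofReal_ne_zero.2 hx.ne'), ← Complex.ofReal_log hx.le,
    mul_comm]
lemma integral_cexp_sech (κ : ℝ) :
    ∫ y : ℝ, Complex.exp (κ * y * Complex.I) * (sech y : ℂ)
      = (Real.pi : ℂ) / (Real.cosh (Real.pi * κ / 2) : ℂ) := by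
  set s : ℂ := 1/2 + (κ/2) * Complex.I with hs_def
  set t : ℂ := 1/2 - (κ/2) * Complex.I with ht_def
  have hs : 0 < s.re := by simp [hs_def]
  have ht : 0 < t.re := by simp [ht_def]
  have hst : s + t = 1 := by rw [hs_def, ht_def]; ring
  have hB := Complex.Gamma_mul_Gamma_eq_betaIntegral hs ht
  rw [hst, Complex.Gamma_one, one_mul] at hB
  have hrefl := Complex.Gamma_mul_Gamma_one_sub s
  have hts : (1 : ℂ) - s = t := by rw [hs_def, ht_def]; ring
  rw [hts, hB] at hrefl
  have hsin : Complex.sin ((Real.pi : ℂ) * s) = (Real.cosh (Real.pi * κ / 2) : ℂ) := by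
    have h1 : (Real.pi : ℂ) * s = ((Real.pi * κ / 2 : ℝ) : ℂ) * Complex.I
        + (Real.pi : ℂ) / 2 := by
      rw [hs_def]; push_cast; ring
    rw [h1, Complex.sin_add_pi_div_two, Complex.cos_mul_I, Complex.ofReal_cosh]
  have hder : ∀ x ∈ (univ : Set ℝ), HasDerivWithinAt phi (sech x ^ 2 / 2) univ x :=
    fun x _ => (hasDerivAt_phi x).hasDerivWithinAt
  have hinj : InjOn phi univ := phi_strictMono.injective.injOn
  have hchg := integral_image_eq_integral_abs_deriv_smul MeasurableSet.univ hder hinj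
      (fun x : ℝ => (x : ℂ) ^ (s - 1) * ((1 : ℂ) - (x : ℂ)) ^ (t - 1))
  rw [phi_image] at hchg
  have hbeta : Complex.betaIntegral s t
      = ∫ x in Ioo (0:ℝ) 1, (x : ℂ) ^ (s - 1) * ((1 : ℂ) - (x : ℂ)) ^ (t - 1) := by
    rw [Complex.betaIntegral, intervalIntegral.integral_of_le zero_le_one,
      integral_Ioc_eq_integral_Ioo]
  have hpt : ∀ y : ℝ, |sech y ^ 2 / 2| •
        ((phi y : ℂ) ^ (s - 1) * ((1 : ℂ) - (phi y : ℂ)) ^ (t - 1))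
      = Complex.exp (κ * y * Complex.I) * (sech y : ℂ) := by
    intro y
    have hcy := Real.cosh_pos y
    have hp := phi_mem y
    have hL : (0:ℝ) < 2 * Real.cosh y := by linarith
    set L : ℝ := Real.log (2 * Real.cosh y) with hLdef
    have hlog1 : Real.log (phi y) = y - L := by
      rw [phi_eq, Real.log_div (Real.exp_pos y).ne' hL.ne', Real.log_exp]
    have hlog2 : Real.log (1 - phi y) = -y - L := by
      rw [one_sub_phi, Real.log_div (Real.exp_pos (-y)).ne' hL.ne', Real.log_exp]
    have hc1 : ((1 : ℂ) - (phi y : ℂ)) = ((1 - phi y : ℝ) : ℂ) := by push_cast; ring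
    rw [hc1, cpow_pos_eq hp.1 (s - 1),
      cpow_pos_eq (by linarith [hp.2] : (0:ℝ) < 1 - phi y) (t - 1),
      hlog1, hlog2, ← Complex.exp_add]
    have hexp : (s - 1) * ((y - L : ℝ) : ℂ) + (t - 1) * ((-y - L : ℝ) : ℂ)
        = (κ : ℂ) * y * Complex.I + ((L : ℝ) : ℂ) := by
      rw [hs_def, ht_def]; push_cast; ring
    rw [hexp, Complex.exp_add, ← Complex.ofReal_exp, Real.exp_log hL]
    have habs : |sech y ^ 2 / 2| = sech y ^ 2 / 2 :=
      abs_of_pos (div_pos (pow_pos (sech_pos y) 2) two_pos)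
    rw [habs, Complex.real_smul]
    have hsc : sech y ^ 2 / 2 * (2 * Real.cosh y) = sech y := by
      rw [sech]; field_simp
    calc ((sech y ^ 2 / 2 : ℝ) : ℂ)
          * (Complex.exp ((κ : ℂ) * y * Complex.I) * ((2 * Real.cosh y : ℝ) : ℂ))
        = Complex.exp ((κ : ℂ) * y * Complex.I)
            * ((sech y ^ 2 / 2 * (2 * Real.cosh y) : ℝ) : ℂ) := by push_cast; ring
      _ = _ := by rw [hsc]
  have hmain : ∫ y : ℝ, Complex.exp (κ * y * Complex.I) * (sech y : ℂ)
      = Complex.betaIntegral s t := by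
    have h1 : ∫ y : ℝ, Complex.exp (κ * y * Complex.I) * (sech y : ℂ)
        = ∫ y : ℝ, |sech y ^ 2 / 2| •
            ((phi y : ℂ) ^ (s - 1) * ((1 : ℂ) - (phi y : ℂ)) ^ (t - 1)) := by
      congr 1; funext y; exact (hpt y).symm
    rw [h1, ← setIntegral_univ, ← hchg, ← hbeta]
  rw [hmain, hrefl, hsin]
lemma integrable_sin_sech (κ : ℝ) : Integrable (fun y => Real.sin (κ * y) * sech y) := by
  refine integrable_of_le_sech 1 ((Real.continuous_sin.comp
    (continuous_const.mul continuous_id)).mul continuous_sech) fun x => ?_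
  rw [one_mul, Real.norm_eq_abs, abs_mul]
  calc |Real.sin (κ * x)| * |sech x| ≤ 1 * |sech x| :=
        mul_le_mul_of_nonneg_right (Real.abs_sin_le_one _) (abs_nonneg _)
    _ = sech x := by rw [one_mul, abs_of_pos (sech_pos x)]

lemma integrable_cos_sech (κ : ℝ) : Integrable (fun y => Real.cos (κ * y) * sech y) := by
  have := integrable_cos_sech_pow κ 1 le_rfl
  simpa using this

lemma integral_cos_sech (κ : ℝ) :
    ∫ y : ℝ, Real.cos (κ * y) * sech y = Real.pi / Real.cosh (Real.pi * κ / 2) := by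
  have h := integral_cexp_sech κ
  have hdec : ∀ y : ℝ, Complex.exp (κ * y * Complex.I) * (sech y : ℂ)
      = ((Real.cos (κ * y) * sech y : ℝ) : ℂ)
        + (Real.sin (κ * y) * sech y) • Complex.I := by
    intro y
    rw [show (κ : ℂ) * y * Complex.I = ((κ * y : ℝ) : ℂ) * Complex.I by push_cast; ring,
      Complex.exp_mul_I, Complex.real_smul]
    push_cast
    ring
  rw [funext hdec] at h
  have hf : Integrable (fun x : ℝ => ((Real.cos (κ * x) * sech x : ℝ) : ℂ)) :=
    (integrable_cos_sech κ).ofReal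
  have hg : Integrable (fun x : ℝ => (Real.sin (κ * x) * sech x) • Complex.I) :=
    (integrable_sin_sech κ).smul_const _
  have hsum : ∫ x : ℝ, (((Real.cos (κ * x) * sech x : ℝ) : ℂ)
        + (Real.sin (κ * x) * sech x) • Complex.I)
      = (∫ x : ℝ, ((Real.cos (κ * x) * sech x : ℝ) : ℂ))
        + ∫ x : ℝ, (Real.sin (κ * x) * sech x) • Complex.I := integral_add hf hg
  rw [hsum, integral_smul_const] at h
  have h1 : (∫ x : ℝ, ((Real.cos (κ * x) * sech x : ℝ) : ℂ))
      = ((∫ x : ℝ, Real.cos (κ * x) * sech x : ℝ) : ℂ) := integral_ofReal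
  rw [h1, ← Complex.ofReal_div] at h
  have hre := congrArg Complex.re h
  simp only [Complex.add_re, Complex.ofReal_re, Complex.real_smul, Complex.mul_re,
    Complex.I_re, Complex.I_im, Complex.ofReal_im, mul_zero, zero_mul, mul_one,
    sub_zero, add_zero, zero_sub, neg_zero] at hre
  exact hre
theorem A2a_overlap_closed_form (k : ℝ) :
    ∫ ξ : ℝ, Real.cos (Real.sqrt 2 * k * ξ) * (Real.tanh ξ) ^ 2 * (sech ξ) ^ 3
      = Real.pi * (-4 * k ^ 4 + 4 * k ^ 2 + 3)
        / (24 * Real.cosh (Real.pi * k / Real.sqrt 2)) := by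
  set κ : ℝ := Real.sqrt 2 * k with hκ
  have hs2 : Real.sqrt 2 * Real.sqrt 2 = 2 := Real.mul_self_sqrt (by norm_num)
  have hs2pos : (0:ℝ) < Real.sqrt 2 := Real.sqrt_pos.2 (by norm_num)
  have hκ2 : κ ^ 2 = 2 * k ^ 2 := by rw [hκ]; linear_combination k ^ 2 * hs2
  have harg : Real.pi * κ / 2 = Real.pi * k / Real.sqrt 2 := by
    rw [hκ, div_eq_div_iff (by norm_num) hs2pos.ne']
    linear_combination Real.pi * k * hs2
  have hch : (0:ℝ) < Real.cosh (Real.pi * k / Real.sqrt 2) := Real.cosh_pos _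
  -- the three moments
  have hi3 : Integrable (fun x => Real.cos (κ * x) * sech x ^ 3) :=
    integrable_cos_sech_pow κ 3 (by norm_num)
  have hi5 : Integrable (fun x => Real.cos (κ * x) * sech x ^ 5) :=
    integrable_cos_sech_pow κ 5 (by norm_num)
  set I1 : ℝ := ∫ x : ℝ, Real.cos (κ * x) * sech x with hI1
  set I3 : ℝ := ∫ x : ℝ, Real.cos (κ * x) * sech x ^ 3 with hI3
  set I5 : ℝ := ∫ x : ℝ, Real.cos (κ * x) * sech x ^ 5 with hI5
  have h3 := recur κ 1 le_rfl
  have h5 := recur κ 3 (by norm_num)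
  have e1 : (∫ x : ℝ, Real.cos (κ * x) * sech x ^ 1) = I1 := by
    rw [hI1]; congr 1; funext x; rw [pow_one]
  have e3 : (∫ x : ℝ, Real.cos (κ * x) * sech x ^ (1 + 2)) = I3 := by rw [hI3]
  have e5 : (∫ x : ℝ, Real.cos (κ * x) * sech x ^ (3 + 2)) = I5 := by rw [hI5]
  rw [e1, e3] at h3
  rw [e5] at h5
  have h5' : (12:ℝ) * I5 = (9 + κ ^ 2) * I3 := by push_cast at h5; linarith
  have h3' : (2:ℝ) * I3 = (1 + κ ^ 2) * I1 := by push_cast at h3; linarith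
  have hI1val : I1 = Real.pi / Real.cosh (Real.pi * k / Real.sqrt 2) := by
    rw [hI1, integral_cos_sech κ, harg]
  -- rewrite the integrand
  have hsplit : ∫ ξ : ℝ, Real.cos (Real.sqrt 2 * k * ξ) * (Real.tanh ξ) ^ 2 * (sech ξ) ^ 3
      = I3 - I5 := by
    rw [hI3, hI5, ← integral_sub hi3 hi5]
    congr 1; funext x
    have ht := tanh_sq x
    rw [← hκ]
    linear_combination Real.cos (κ * x) * sech x ^ 3 * ht
  rw [hsplit]
  rw [hI1val] at h3'
  have hI3v : I3 = (1 + κ ^ 2) * (Real.pi / Real.cosh (Real.pi * k / Real.sqrt 2)) / 2 := by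
    linarith
  have hI5v : I5 = (9 + κ ^ 2) * I3 / 12 := by linarith
  rw [hI5v, hI3v, hκ2]
  field_simp
  ring
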